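/- arXiv:1909.04897 — 3 statements merged into one kernel-verified Lean document; each statement's English description precedes it below -/
import Mathlib

section
/- (Theorem 7.8, case d = 1.) For every integer k ≥ 1 one has Φ(k,1) = 0 in ℚ(λ₀,λ₃); equivalently, the T-equivariant Joyce–Song stable pair invariant P^{JS}_{k+1,1} of the local curve X = Tot_{ℙ¹}(O(−1)⊕O(−1)⊕O) vanishes for all k ≥ 1. -/
set_option maxHeartbeats 1000000

noncomputable section

/-- The field `ℚ(λ₀, λ₃)`, realized as the fraction field of the polynomial ring
`ℚ[λ₀, λ₃]` in two variables. -/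
abbrev KK : Type := FractionRing (MvPolynomial (Fin 2) ℚ)

/-- The variable `λ₀` viewed in `ℚ(λ₀, λ₃)`. -/
def lam0 : KK := algebraMap (MvPolynomial (Fin 2) ℚ) KK (MvPolynomial.X 0)

/-- The variable `λ₃` viewed in `ℚ(λ₀, λ₃)`. -/
def lam3 : KK := algebraMap (MvPolynomial (Fin 2) ℚ) KK (MvPolynomial.X 1)

/-- `Φ(k,d) ∈ ℚ(λ₀,λ₃)`: the sum over all tuples `(d₀,…,d_k)` of nonnegative integers with
`d₀+⋯+d_k = d` of
`(1/(d₀!⋯d_k!)) · ∏_{0≤i<j≤k} ((j−i)λ₀ + (d_i−d_j)λ₃)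
  · ∏_{i=0}^{k} ( ∏_{1≤a≤d_i, 1≤b≤k−i} (aλ₃+bλ₀)⁻¹ · ∏_{1≤a≤d_i, 1≤b≤i} (aλ₃−bλ₀)⁻¹ )`. -/
def Phi (k d : ℕ) : KK :=
  ∑ t ∈ Finset.Nat.antidiagonalTuple (k + 1) d,
    (∏ i : Fin (k + 1), (Nat.factorial (t i) : KK))⁻¹ *
    (∏ p ∈ Finset.univ.filter (fun p : Fin (k + 1) × Fin (k + 1) => p.1 < p.2),
        ((((p.2 : ℕ) : KK) - ((p.1 : ℕ) : KK)) * lam0 +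
          ((t p.1 : KK) - (t p.2 : KK)) * lam3)) *
    ∏ i : Fin (k + 1),
      ((∏ a ∈ Finset.Icc 1 (t i), ∏ b ∈ Finset.Icc 1 (k - (i : ℕ)),
          ((a : KK) * lam3 + (b : KK) * lam0)⁻¹) *
       (∏ a ∈ Finset.Icc 1 (t i), ∏ b ∈ Finset.Icc 1 (i : ℕ),
          ((a : KK) * lam3 - (b : KK) * lam0)⁻¹))


lemma anti_one (n : ℕ) :
    Finset.Nat.antidiagonalTuple (n + 1) 1 =
      Finset.univ.image (fun m : Fin (n + 1) => (Pi.single m 1 : Fin (n + 1) → ℕ)) := by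
  ext t
  simp only [Finset.Nat.mem_antidiagonalTuple, Finset.mem_image, Finset.mem_univ, true_and]
  constructor
  · intro ht
    have hne : ∃ m, t m ≠ 0 := by
      by_contra h
      push_neg at h
      simp [h] at ht
    obtain ⟨m, hm⟩ := hne
    have h1 : t m = 1 := by
      have hle : t m ≤ 1 := ht ▸ Finset.single_le_sum (f := t) (fun i _ => Nat.zero_le _)
        (Finset.mem_univ m)
      omega
    refine ⟨m, funext fun j => ?_⟩
    rcases eq_or_ne j m with rfl | hj
    · simpa using h1.symm
    · have : ∑ i ∈ Finset.univ.erase m, t i = 0 := by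
        have := Finset.add_sum_erase Finset.univ t (Finset.mem_univ m)
        omega
      rw [Finset.sum_eq_zero_iff] at this
      have := this j (Finset.mem_erase.mpr ⟨hj, Finset.mem_univ j⟩)
      simp [Pi.single_eq_of_ne hj, this]
  · rintro ⟨m, rfl⟩
    simp [Pi.single_apply]

open Matrix in
lemma alt_sum (k : ℕ) (hk : 1 ≤ k) :
    ∑ m : Fin (k + 1), (-1 : ℚ) ^ (m : ℕ) *
      ∏ a : Fin k, ∏ b ∈ Finset.Ioi a,
        (((m.succAbove b : Fin (k+1)) : ℚ) - ((m.succAbove a : Fin (k+1)) : ℚ)) = 0 := by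
  set M : Matrix (Fin (k + 1)) (Fin (k + 1)) ℚ :=
    Matrix.of (fun i j : Fin (k + 1) => ((j : ℕ) : ℚ) ^ ((i : ℕ) - 1)) with hM
  have hv1 : ((1 : Fin (k + 1)) : ℕ) = 1 := by rw [Fin.val_one', Nat.mod_eq_of_lt (by omega)]
  have hdet0 : M.det = 0 := by
    apply Matrix.det_zero_of_row_eq (i := 0) (j := 1)
    · intro h
      have := congrArg Fin.val h
      rw [Fin.val_zero, hv1] at this
      omega
    · funext j
      simp [hM, Nat.mod_eq_of_lt (show 1 < k + 1 by omega)]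
  have hexp := Matrix.det_succ_row_zero M
  rw [hdet0] at hexp
  have hsub : ∀ j : Fin (k + 1),
      (M.submatrix Fin.succ j.succAbove).det =
        ∏ a : Fin k, ∏ b ∈ Finset.Ioi a,
          (((j.succAbove b : Fin (k+1)) : ℚ) - ((j.succAbove a : Fin (k+1)) : ℚ)) := by
    intro j
    have : M.submatrix Fin.succ j.succAbove =
        (Matrix.vandermonde (fun l : Fin k => ((j.succAbove l : Fin (k+1)) : ℚ)))ᵀ := by
      ext i l
      simp [hM, Matrix.vandermonde]
    rw [this, Matrix.det_transpose, Matrix.det_vandermonde]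
  calc ∑ m : Fin (k + 1), (-1 : ℚ) ^ (m : ℕ) *
      ∏ a : Fin k, ∏ b ∈ Finset.Ioi a,
        (((m.succAbove b : Fin (k+1)) : ℚ) - ((m.succAbove a : Fin (k+1)) : ℚ))
      = ∑ j : Fin (k + 1), (-1 : ℚ) ^ (j : ℕ) * M 0 j * (M.submatrix Fin.succ j.succAbove).det := by
        refine Finset.sum_congr rfl fun j _ => ?_
        rw [hsub j]
        have : M 0 j = 1 := by simp [hM]
        rw [this]
        ring
    _ = 0 := hexp.symm


lemma ratCast_eq (a : ℚ) :
    (a : KK) = algebraMap (MvPolynomial (Fin 2) ℚ) KK (MvPolynomial.C a) := by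
  rw [← MvPolynomial.algebraMap_eq, ← IsScalarTower.algebraMap_apply, eq_ratCast]

lemma aux_ne_add (a b : ℚ) (ha : a ≠ 0) : (a : KK) * lam3 + (b : KK) * lam0 ≠ 0 := by
  have : (a : KK) * lam3 + (b : KK) * lam0 =
      algebraMap (MvPolynomial (Fin 2) ℚ) KK
        (MvPolynomial.C a * MvPolynomial.X 1 + MvPolynomial.C b * MvPolynomial.X 0) := by
    rw [map_add, map_mul, map_mul, ratCast_eq a, ratCast_eq b, lam0, lam3]
  rw [this]
  simp only [ne_eq, IsFractionRing.to_map_eq_zero_iff]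
  intro h
  have := congrArg (MvPolynomial.coeff (Finsupp.single (1 : Fin 2) 1)) h
  simp [MvPolynomial.coeff_X', Finsupp.single_eq_single_iff] at this
  exact ha this

lemma aux_ne_sub (a b : ℚ) (ha : a ≠ 0) : (a : KK) * lam3 - (b : KK) * lam0 ≠ 0 := by
  have := aux_ne_add a (-b) ha
  rw [Rat.cast_neg] at this
  simpa [sub_eq_add_neg, neg_mul] using this

lemma plus_ne (b : ℕ) : lam3 + (b : KK) * lam0 ≠ 0 := by
  simpa using aux_ne_add 1 (b : ℚ) one_ne_zero

lemma minus_ne (b : ℕ) : lam3 - (b : KK) * lam0 ≠ 0 := by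
  simpa using aux_ne_sub 1 (b : ℚ) one_ne_zero

lemma prod_pairs {M : Type*} [CommMonoid M] {n : ℕ} (f : Fin n → Fin n → M) :
    ∏ p ∈ Finset.univ.filter (fun p : Fin n × Fin n => p.1 < p.2), f p.1 p.2
      = ∏ i : Fin n, ∏ j ∈ Finset.Ioi i, f i j := by
  rw [← Finset.prod_sigma (Finset.univ) (fun i => Finset.Ioi i) (fun x => f x.1 x.2)]
  refine Finset.prod_nbij' (fun p => ⟨p.1, p.2⟩) (fun x => (x.1, x.2)) ?_ ?_ ?_ ?_ ?_ <;>
    simp +contextual [Finset.mem_filter, Finset.mem_sigma]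

lemma term_eq (k : ℕ) (m : Fin (k + 1)) :
    (∏ i : Fin (k + 1), (Nat.factorial ((Pi.single m 1 : Fin (k + 1) → ℕ) i) : KK))⁻¹ *
    (∏ p ∈ Finset.univ.filter (fun p : Fin (k + 1) × Fin (k + 1) => p.1 < p.2),
        ((((p.2 : ℕ) : KK) - ((p.1 : ℕ) : KK)) * lam0 +
          (((Pi.single m 1 : Fin (k + 1) → ℕ) p.1 : KK) -
            ((Pi.single m 1 : Fin (k + 1) → ℕ) p.2 : KK)) * lam3)) *
    (∏ i : Fin (k + 1),
      ((∏ a ∈ Finset.Icc 1 ((Pi.single m 1 : Fin (k + 1) → ℕ) i),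
          ∏ b ∈ Finset.Icc 1 (k - (i : ℕ)), ((a : KK) * lam3 + (b : KK) * lam0)⁻¹) *
       (∏ a ∈ Finset.Icc 1 ((Pi.single m 1 : Fin (k + 1) → ℕ) i),
          ∏ b ∈ Finset.Icc 1 (i : ℕ), ((a : KK) * lam3 - (b : KK) * lam0)⁻¹))) =
    (((-1 : ℚ) ^ (m : ℕ) *
        ∏ a : Fin k, ∏ b ∈ Finset.Ioi a,
          (((m.succAbove b : Fin (k + 1)) : ℚ) - ((m.succAbove a : Fin (k + 1)) : ℚ)) : ℚ) : KK) *
      ∏ p ∈ Finset.univ.filter (fun p : Fin k × Fin k => p.1 < p.2), lam0 := by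
  classical
  set S := Finset.univ.filter (fun p : Fin (k + 1) × Fin (k + 1) => p.1 < p.2) with hS
  -- factorial factor
  have hF : (∏ i : Fin (k + 1), (Nat.factorial ((Pi.single m 1 : Fin (k + 1) → ℕ) i) : KK)) = 1 := by
    apply Finset.prod_eq_one
    intro i _
    rcases eq_or_ne i m with rfl | h
    · simp
    · simp [Pi.single_eq_of_ne h]
  -- the inverse-factor product
  have hQ : (∏ i : Fin (k + 1),
      ((∏ a ∈ Finset.Icc 1 ((Pi.single m 1 : Fin (k + 1) → ℕ) i),
          ∏ b ∈ Finset.Icc 1 (k - (i : ℕ)), ((a : KK) * lam3 + (b : KK) * lam0)⁻¹) *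
       (∏ a ∈ Finset.Icc 1 ((Pi.single m 1 : Fin (k + 1) → ℕ) i),
          ∏ b ∈ Finset.Icc 1 (i : ℕ), ((a : KK) * lam3 - (b : KK) * lam0)⁻¹))) =
      (∏ b ∈ Finset.Icc 1 (k - (m : ℕ)), (lam3 + (b : KK) * lam0)⁻¹) *
      (∏ b ∈ Finset.Icc 1 (m : ℕ), (lam3 - (b : KK) * lam0)⁻¹) := by
    rw [Fintype.prod_eq_single m (fun i hi => by simp [Pi.single_eq_of_ne hi])]
    simp [Finset.Icc_self]
  -- split of the linear-factor product
  have hsplit : ∏ p ∈ S,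
      ((((p.2 : ℕ) : KK) - ((p.1 : ℕ) : KK)) * lam0 +
        (((Pi.single m 1 : Fin (k + 1) → ℕ) p.1 : KK) -
          ((Pi.single m 1 : Fin (k + 1) → ℕ) p.2 : KK)) * lam3) =
      (∏ p ∈ S.filter (fun p => p.1 = m),
        ((((p.2 : ℕ) : KK) - ((p.1 : ℕ) : KK)) * lam0 +
          (((Pi.single m 1 : Fin (k + 1) → ℕ) p.1 : KK) -
            ((Pi.single m 1 : Fin (k + 1) → ℕ) p.2 : KK)) * lam3)) *
      ((∏ p ∈ (S.filter (fun p => ¬p.1 = m)).filter (fun p => p.2 = m),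
        ((((p.2 : ℕ) : KK) - ((p.1 : ℕ) : KK)) * lam0 +
          (((Pi.single m 1 : Fin (k + 1) → ℕ) p.1 : KK) -
            ((Pi.single m 1 : Fin (k + 1) → ℕ) p.2 : KK)) * lam3)) *
       (∏ p ∈ (S.filter (fun p => ¬p.1 = m)).filter (fun p => ¬p.2 = m),
        ((((p.2 : ℕ) : KK) - ((p.1 : ℕ) : KK)) * lam0 +
          (((Pi.single m 1 : Fin (k + 1) → ℕ) p.1 : KK) -
            ((Pi.single m 1 : Fin (k + 1) → ℕ) p.2 : KK)) * lam3))) := by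
    rw [Finset.prod_filter_mul_prod_filter_not (S.filter (fun p => ¬p.1 = m)) (fun p => p.2 = m),
      Finset.prod_filter_mul_prod_filter_not S (fun p => p.1 = m)]
  -- first block
  have hP1 : (∏ p ∈ S.filter (fun p => p.1 = m),
      ((((p.2 : ℕ) : KK) - ((p.1 : ℕ) : KK)) * lam0 +
        (((Pi.single m 1 : Fin (k + 1) → ℕ) p.1 : KK) -
          ((Pi.single m 1 : Fin (k + 1) → ℕ) p.2 : KK)) * lam3)) =
      ∏ b ∈ Finset.Icc 1 (k - (m : ℕ)), (lam3 + (b : KK) * lam0) := by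
    refine Finset.prod_bij (fun p _ => (p.2 : ℕ) - (m : ℕ)) ?_ ?_ ?_ ?_
    · intro p hp
      simp only [hS, Finset.mem_filter, Finset.mem_univ, true_and] at hp
      obtain ⟨hlt, h1⟩ := hp
      rw [h1] at hlt
      have h2 := p.2.isLt
      rw [Fin.lt_def] at hlt
      simp only [Finset.mem_Icc]
      omega
    · intro p hp q hq hpq
      simp only [hS, Finset.mem_filter, Finset.mem_univ, true_and] at hp hq
      obtain ⟨hlt, h1⟩ := hp
      obtain ⟨hlt', h1'⟩ := hq
      rw [h1] at hlt; rw [h1'] at hlt'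
      rw [Fin.lt_def] at hlt hlt'
      have : p.2 = q.2 := Fin.ext (by omega)
      exact Prod.ext (h1.trans h1'.symm) this
    · intro b hb
      simp only [Finset.mem_Icc] at hb
      have h2 := m.isLt
      refine ⟨(m, ⟨(m : ℕ) + b, by omega⟩), ?_, by simp⟩
      simp only [hS, Finset.mem_filter, Finset.mem_univ, true_and]
      exact ⟨by rw [Fin.lt_def]; simp; omega, by trivial⟩
    · intro p hp
      simp only [hS, Finset.mem_filter, Finset.mem_univ, true_and] at hp
      obtain ⟨hlt, h1⟩ := hp
      rw [h1] at hlt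
      have hne : p.2 ≠ m := ne_of_gt hlt
      rw [h1, Pi.single_eq_same, Pi.single_eq_of_ne hne]
      rw [Fin.lt_def] at hlt
      rw [Nat.cast_sub (le_of_lt hlt)]
      push_cast
      ring
  -- second block
  have hP2 : (∏ p ∈ (S.filter (fun p => ¬p.1 = m)).filter (fun p => p.2 = m),
      ((((p.2 : ℕ) : KK) - ((p.1 : ℕ) : KK)) * lam0 +
        (((Pi.single m 1 : Fin (k + 1) → ℕ) p.1 : KK) -
          ((Pi.single m 1 : Fin (k + 1) → ℕ) p.2 : KK)) * lam3)) =
      ∏ b ∈ Finset.Icc 1 (m : ℕ), ((b : KK) * lam0 - lam3) := by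
    refine Finset.prod_bij (fun p _ => (m : ℕ) - (p.1 : ℕ)) ?_ ?_ ?_ ?_
    · intro p hp
      simp only [hS, Finset.mem_filter, Finset.mem_univ, true_and] at hp
      obtain ⟨⟨hlt, h1⟩, h2⟩ := hp
      rw [h2] at hlt
      rw [Fin.lt_def] at hlt
      simp only [Finset.mem_Icc]
      omega
    · intro p hp q hq hpq
      simp only [hS, Finset.mem_filter, Finset.mem_univ, true_and] at hp hq
      obtain ⟨⟨hlt, h1⟩, h2⟩ := hp
      obtain ⟨⟨hlt', h1'⟩, h2'⟩ := hq
      rw [h2] at hlt; rw [h2'] at hlt'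
      rw [Fin.lt_def] at hlt hlt'
      have : p.1 = q.1 := Fin.ext (by omega)
      exact Prod.ext this (h2.trans h2'.symm)
    · intro b hb
      simp only [Finset.mem_Icc] at hb
      have h2 := m.isLt
      refine ⟨(⟨(m : ℕ) - b, by omega⟩, m), ?_, by dsimp only; omega⟩
      simp only [hS, Finset.mem_filter, Finset.mem_univ, true_and]
      refine ⟨⟨by rw [Fin.lt_def]; simp only [Fin.val_mk]; omega, ?_⟩, by trivial⟩
      intro h
      have := congrArg Fin.val h
      simp at this
      omega
    · intro p hp
      simp only [hS, Finset.mem_filter, Finset.mem_univ, true_and] at hp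
      obtain ⟨⟨hlt, h1⟩, h2⟩ := hp
      have hne : p.1 ≠ m := h1
      rw [h2, Pi.single_eq_same, Pi.single_eq_of_ne hne]
      rw [h2, Fin.lt_def] at hlt
      rw [Nat.cast_sub (le_of_lt hlt)]
      push_cast
      ring
  -- third block
  have hP3 : (∏ p ∈ (S.filter (fun p => ¬p.1 = m)).filter (fun p => ¬p.2 = m),
      ((((p.2 : ℕ) : KK) - ((p.1 : ℕ) : KK)) * lam0 +
        (((Pi.single m 1 : Fin (k + 1) → ℕ) p.1 : KK) -
          ((Pi.single m 1 : Fin (k + 1) → ℕ) p.2 : KK)) * lam3)) =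
      ∏ q ∈ Finset.univ.filter (fun q : Fin k × Fin k => q.1 < q.2),
        ((((m.succAbove q.2 : Fin (k + 1)) : ℕ) : KK) -
          (((m.succAbove q.1 : Fin (k + 1)) : ℕ) : KK)) * lam0 := by
    refine (Finset.prod_bij (fun q _ => (m.succAbove q.1, m.succAbove q.2)) ?_ ?_ ?_ ?_).symm
    · intro q hq
      simp only [Finset.mem_filter, Finset.mem_univ, true_and] at hq
      simp only [hS, Finset.mem_filter, Finset.mem_univ, true_and]
      exact ⟨⟨Fin.succAbove_lt_succAbove_iff.mpr hq, fun h => Fin.succAbove_ne m q.1 h⟩,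
        fun h => Fin.succAbove_ne m q.2 h⟩
    · intro q hq r hr hqr
      have h1 := congrArg Prod.fst hqr
      have h2 := congrArg Prod.snd hqr
      simp only at h1 h2
      exact Prod.ext (Fin.succAbove_right_injective h1) (Fin.succAbove_right_injective h2)
    · intro p hp
      simp only [hS, Finset.mem_filter, Finset.mem_univ, true_and] at hp
      obtain ⟨⟨hlt, h1⟩, h2⟩ := hp
      obtain ⟨a, ha⟩ := Fin.exists_succAbove_eq (show p.1 ≠ m from h1)
      obtain ⟨b, hb⟩ := Fin.exists_succAbove_eq (show p.2 ≠ m from h2)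
      refine ⟨(a, b), ?_, by dsimp only; rw [ha, hb]⟩
      simp only [Finset.mem_filter, Finset.mem_univ, true_and]
      rw [← ha, ← hb] at hlt
      exact Fin.succAbove_lt_succAbove_iff.mp hlt
    · intro q hq
      simp [Pi.single_eq_of_ne (Fin.succAbove_ne m q.1), Pi.single_eq_of_ne (Fin.succAbove_ne m q.2)]
  -- assemble
  rw [hF, inv_one, one_mul, hQ, hsplit, hP1, hP2, hP3]
  have hy : ∀ b ∈ Finset.Icc 1 (m : ℕ), ((b : KK) * lam0 - lam3) = (-1) * (lam3 - (b : KK) * lam0) :=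
    fun b _ => by ring
  rw [Finset.prod_congr rfl hy, Finset.prod_mul_distrib, Finset.prod_const, Nat.card_Icc]
  rw [Finset.prod_mul_distrib (s := Finset.univ.filter (fun q : Fin k × Fin k => q.1 < q.2))]
  rw [Finset.prod_inv_distrib, Finset.prod_inv_distrib]
  have hA : (∏ b ∈ Finset.Icc 1 (k - (m : ℕ)), (lam3 + (b : KK) * lam0)) ≠ 0 :=
    Finset.prod_ne_zero_iff.mpr (fun b _ => plus_ne b)
  have hB : (∏ b ∈ Finset.Icc 1 (m : ℕ), (lam3 - (b : KK) * lam0)) ≠ 0 :=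
    Finset.prod_ne_zero_iff.mpr (fun b _ => minus_ne b)
  push_cast
  rw [← prod_pairs (fun a b : Fin k =>
    (((m.succAbove b : Fin (k + 1)) : ℕ) : KK) - (((m.succAbove a : Fin (k + 1)) : ℕ) : KK))]
  set A := ∏ b ∈ Finset.Icc 1 (k - (m : ℕ)), (lam3 + (b : KK) * lam0) with hAdef
  set B := ∏ b ∈ Finset.Icc 1 (m : ℕ), (lam3 - (b : KK) * lam0) with hBdef
  set C := ∏ q ∈ Finset.univ.filter (fun q : Fin k × Fin k => q.1 < q.2),
      ((((m.succAbove q.2 : Fin (k + 1)) : ℕ) : KK) -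
        (((m.succAbove q.1 : Fin (k + 1)) : ℕ) : KK)) with hCdef
  set D := ∏ p ∈ Finset.univ.filter (fun p : Fin k × Fin k => p.1 < p.2), lam0 with hDdef
  have key : A * ((-1 : KK) ^ (m : ℕ) * B * (C * D)) * (A⁻¹ * B⁻¹) =
      (A * A⁻¹) * (B * B⁻¹) * ((-1 : KK) ^ (m : ℕ) * (C * D)) := by ring
  rw [key, mul_inv_cancel₀ hA, mul_inv_cancel₀ hB, one_mul, one_mul]
  ring


/-- Theorem 7.8, case `d = 1`: `Φ(k,1) = 0` for every `k ≥ 1`; equivalently,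
the `T`-equivariant Joyce–Song stable pair invariant `P^{JS}_{k+1,1}` of
`Tot_{ℙ¹}(O(−1)⊕O(−1)⊕O)` vanishes. -/
theorem stmt_2 (k : ℕ) (hk : 1 ≤ k) : Phi k 1 = 0 := by
  have hinj : ∀ x ∈ (Finset.univ : Finset (Fin (k + 1))), ∀ y ∈ (Finset.univ : Finset (Fin (k + 1))),
      (Pi.single x 1 : Fin (k + 1) → ℕ) = Pi.single y 1 → x = y := by
    intro a _ b _ h
    by_contra hne
    have := congrFun h a
    rw [Pi.single_eq_same, Pi.single_eq_of_ne hne] at this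
    exact one_ne_zero this
  rw [Phi, anti_one k, Finset.sum_image hinj]
  rw [Finset.sum_congr rfl (fun m _ => term_eq k m)]
  rw [← Finset.sum_mul, ← Rat.cast_sum, alt_sum k hk, Rat.cast_zero, zero_mul]

end
end

section
/- (Lemma 7.3 of the paper: the chosen class is a square root.) Let k ≥ 0 be an integer and (d₀,…,d_k) a tuple of nonnegative integers. In the group algebra R = ℤ[ℤ×ℤ], writing t^{(a,b)} for the basis element corresponding to (a,b) ∈ ℤ×ℤ, define A = Σ_{i=0}^{k} ( Σ_{j=−(k−i)}^{i} t^{(j,0)} ) · ( Σ_{j'=0}^{d_i−1} t^{(0,−j')} ), B = Σ_{0≤i<j≤k} t^{(j−i,0)} · ( 1 − t^{(0,d_i)} − t^{(0,−d_j)} + t^{(0,d_i−d_j)} ), C = Σ_{i=0}^{k} ( 1 − t^{(0,d_i)} ), and D = Σ_{i=0}^{k} Σ_{j=0}^{k} t^{(j−i,0)} · ( 2 − t^{(0,1)} − t^{(0,−1)} ) · ( Σ_{s=0}^{d_i−1} t^{(0,s)} ) · ( Σ_{r=0}^{d_j−1} t^{(0,−r)} ). Let ι : R → R be the ring involution induced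 by the group automorphism (a,b) ↦ (−a,−b) of ℤ×ℤ. Then the element S := −A + B + C satisfies S + ι(S) = D − A − ι(A). -/
noncomputable section

/-- The group algebra `R = ℤ[ℤ×ℤ]`. -/
abbrev RR : Type := AddMonoidAlgebra ℤ (ℤ × ℤ)

/-- The basis element `t^{(a,b)}` of `R = ℤ[ℤ×ℤ]` corresponding to `(a,b) ∈ ℤ×ℤ`. -/
def tm (w : ℤ × ℤ) : RR := AddMonoidAlgebra.single w 1

/-- The ring involution `ι : R → R` induced by the group automorphism
`(a,b) ↦ (−a,−b)` of `ℤ×ℤ`. -/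
def iota : RR →+* RR :=
  AddMonoidAlgebra.mapDomainRingHom ℤ
    (AddMonoidHom.mk' (fun w : ℤ × ℤ => -w) fun a b => neg_add a b)

/-- `A = Σ_{i=0}^{k} ( Σ_{j=−(k−i)}^{i} t^{(j,0)} ) · ( Σ_{j'=0}^{d_i−1} t^{(0,−j')} )`. -/
def Achar (k : ℕ) (d : Fin (k + 1) → ℕ) : RR :=
  ∑ i : Fin (k + 1),
    (∑ j ∈ Finset.Icc (-((k : ℤ) - (i : ℕ))) ((i : ℕ) : ℤ), tm (j, 0)) *
      (∑ j' ∈ Finset.range (d i), tm (0, -(j' : ℤ)))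

/-- `B = Σ_{0≤i<j≤k} t^{(j−i,0)} · ( 1 − t^{(0,d_i)} − t^{(0,−d_j)} + t^{(0,d_i−d_j)} )`. -/
def Bchar (k : ℕ) (d : Fin (k + 1) → ℕ) : RR :=
  ∑ p ∈ Finset.univ.filter (fun p : Fin (k + 1) × Fin (k + 1) => p.1 < p.2),
    tm ((((p.2 : ℕ) : ℤ) - ((p.1 : ℕ) : ℤ)), 0) *
      (1 - tm (0, (d p.1 : ℤ)) - tm (0, -(d p.2 : ℤ)) + tm (0, (d p.1 : ℤ) - (d p.2 : ℤ)))

/-- `C = Σ_{i=0}^{k} ( 1 − t^{(0,d_i)} )`. -/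
def Cchar (k : ℕ) (d : Fin (k + 1) → ℕ) : RR :=
  ∑ i : Fin (k + 1), (1 - tm (0, (d i : ℤ)))

/-- `D = Σ_{i=0}^{k} Σ_{j=0}^{k} t^{(j−i,0)} · (2 − t^{(0,1)} − t^{(0,−1)})
      · ( Σ_{s=0}^{d_i−1} t^{(0,s)} ) · ( Σ_{r=0}^{d_j−1} t^{(0,−r)} )`. -/
def Dchar (k : ℕ) (d : Fin (k + 1) → ℕ) : RR :=
  ∑ i : Fin (k + 1), ∑ j : Fin (k + 1),
    tm ((((j : ℕ) : ℤ) - ((i : ℕ) : ℤ)), 0) * (2 - tm (0, 1) - tm (0, -1)) *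
      (∑ s ∈ Finset.range (d i), tm (0, (s : ℤ))) *
      (∑ r ∈ Finset.range (d j), tm (0, -(r : ℤ)))

lemma tm_mul (a b : ℤ × ℤ) : tm a * tm b = tm (a + b) := by
  simp [tm, AddMonoidAlgebra.single_mul_single]

lemma tm_zero : tm 0 = 1 := rfl

lemma iota_tm (w : ℤ × ℤ) : iota (tm w) = tm (-w) := by
  simp [iota, tm, AddMonoidAlgebra.mapDomainRingHom]

lemma telescope_pos (d : ℕ) :
    (1 - tm (0,1)) * ∑ s ∈ Finset.range d, tm (0,(s:ℤ)) = 1 - tm (0,(d:ℤ)) := by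
  induction d with
  | zero => simp [tm_zero, Prod.mk_zero_zero]
  | succ n ih =>
    rw [Finset.sum_range_succ, mul_add, ih]
    have h : (1 - tm (0,1)) * tm (0,(n:ℤ)) = tm (0,(n:ℤ)) - tm (0,((n:ℤ)+1)) := by
      rw [sub_mul, one_mul, tm_mul]
      norm_num [Prod.mk_add_mk, add_comm]
    rw [h]
    push_cast
    ring_nf

lemma telescope_neg (d : ℕ) :
    (1 - tm (0,-1)) * ∑ r ∈ Finset.range d, tm (0,-(r:ℤ)) = 1 - tm (0,-(d:ℤ)) := by
  induction d with
  | zero => simp [tm_zero, Prod.mk_zero_zero]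
  | succ n ih =>
    rw [Finset.sum_range_succ, mul_add, ih]
    have h : (1 - tm (0,-1)) * tm (0,-(n:ℤ)) = tm (0,-(n:ℤ)) - tm (0,(-(n:ℤ)-1)) := by
      rw [sub_mul, one_mul, tm_mul]
      norm_num [Prod.mk_add_mk]
      ring_nf
    rw [h]
    push_cast
    ring_nf

lemma factor2 : (2 : RR) - tm (0,1) - tm (0,-1) = (1 - tm (0,1)) * (1 - tm (0,-1)) := by
  have h : tm (0,1) * tm (0,-1) = 1 := by rw [tm_mul]; norm_num [tm_zero, Prod.mk_zero_zero]
  calc (2 : RR) - tm (0,1) - tm (0,-1)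
      = 1 - tm (0,1) - tm (0,-1) + tm (0,1) * tm (0,-1) := by rw [h]; ring
    _ = (1 - tm (0,1)) * (1 - tm (0,-1)) := by ring

lemma sum_split {M : Type*} [AddCommMonoid M] (n : ℕ) (g : Fin n → Fin n → M) :
    ∑ i : Fin n, ∑ j : Fin n, g i j =
      (∑ p ∈ Finset.univ.filter (fun p : Fin n × Fin n => p.1 < p.2), g p.1 p.2)
      + (∑ i : Fin n, g i i)
      + (∑ p ∈ Finset.univ.filter (fun p : Fin n × Fin n => p.1 < p.2), g p.2 p.1) := by
  rw [← Finset.sum_product']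
  rw [← Finset.sum_filter_add_sum_filter_not (Finset.univ ×ˢ Finset.univ)
    (fun p : Fin n × Fin n => p.1 < p.2) (fun p => g p.1 p.2), add_assoc]
  congr 1
  rw [← Finset.sum_filter_add_sum_filter_not _ (fun p : Fin n × Fin n => p.1 = p.2)
    (fun p => g p.1 p.2)]
  congr 1
  · rw [Finset.filter_filter]
    refine Finset.sum_nbij' (fun p => p.1) (fun i => (i,i)) ?_ ?_ ?_ ?_ ?_ <;>
      simp +contextual [le_antisymm_iff, Prod.ext_iff]
    intro a b h1 h2
    rw [le_antisymm h2 h1]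
  · rw [Finset.filter_filter]
    refine Finset.sum_nbij' (fun p => (p.2, p.1)) (fun p => (p.2, p.1)) ?_ ?_ ?_ ?_ ?_ <;>
      simp +contextual [Prod.ext_iff]
    · intro a b h1 h2; omega
    · intro a b h; omega

/-- The off-diagonal building block. -/
def gg (k : ℕ) (d : Fin (k + 1) → ℕ) (i j : Fin (k + 1)) : RR :=
  tm ((((j : ℕ) : ℤ) - ((i : ℕ) : ℤ)), 0) *
    ((1 - tm (0, (d i : ℤ))) * (1 - tm (0, -(d j : ℤ))))

lemma gg_expand (k : ℕ) (d : Fin (k + 1) → ℕ) (i j : Fin (k + 1)) :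
    gg k d i j = tm ((((j : ℕ) : ℤ) - ((i : ℕ) : ℤ)), 0) *
      (1 - tm (0, (d i : ℤ)) - tm (0, -(d j : ℤ)) + tm (0, (d i : ℤ) - (d j : ℤ))) := by
  unfold gg
  congr 1
  have h : tm (0, (d i : ℤ)) * tm (0, -(d j : ℤ)) = tm (0, (d i : ℤ) - (d j : ℤ)) := by
    rw [tm_mul]; norm_num [Prod.mk_add_mk, sub_eq_add_neg]
  rw [← h]; ring

lemma hD (k : ℕ) (d : Fin (k + 1) → ℕ) :
    Dchar k d = ∑ i : Fin (k + 1), ∑ j : Fin (k + 1), gg k d i j := by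
  unfold Dchar gg
  refine Finset.sum_congr rfl fun i _ => Finset.sum_congr rfl fun j _ => ?_
  calc tm ((((j : ℕ) : ℤ) - ((i : ℕ) : ℤ)), 0) * (2 - tm (0, 1) - tm (0, -1)) *
        (∑ s ∈ Finset.range (d i), tm (0, (s : ℤ))) *
        (∑ r ∈ Finset.range (d j), tm (0, -(r : ℤ)))
      = tm ((((j : ℕ) : ℤ) - ((i : ℕ) : ℤ)), 0) *
          (((1 - tm (0,1)) * ∑ s ∈ Finset.range (d i), tm (0,(s:ℤ))) *
           ((1 - tm (0,-1)) * ∑ r ∈ Finset.range (d j), tm (0,-(r:ℤ)))) := by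
        rw [factor2]; ring
    _ = _ := by rw [telescope_pos, telescope_neg]

lemma hB (k : ℕ) (d : Fin (k + 1) → ℕ) :
    Bchar k d = ∑ p ∈ Finset.univ.filter (fun p : Fin (k + 1) × Fin (k + 1) => p.1 < p.2),
      gg k d p.1 p.2 := by
  unfold Bchar
  refine Finset.sum_congr rfl fun p _ => ?_
  rw [gg_expand]

lemma hiB (k : ℕ) (d : Fin (k + 1) → ℕ) :
    iota (Bchar k d) =
      ∑ p ∈ Finset.univ.filter (fun p : Fin (k + 1) × Fin (k + 1) => p.1 < p.2),
        gg k d p.2 p.1 := by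
  rw [Bchar, map_sum]
  refine Finset.sum_congr rfl fun p _ => ?_
  rw [gg_expand]
  simp only [map_mul, map_add, map_sub, map_one, iota_tm, Prod.neg_mk, neg_zero, neg_neg,
    neg_sub]
  ring

lemma hC (k : ℕ) (d : Fin (k + 1) → ℕ) :
    Cchar k d + iota (Cchar k d) = ∑ i : Fin (k + 1), gg k d i i := by
  rw [Cchar, map_sum, ← Finset.sum_add_distrib]
  refine Finset.sum_congr rfl fun i _ => ?_
  simp only [map_sub, map_one, iota_tm, Prod.neg_mk, neg_zero]
  rw [gg_expand]
  have h0 : tm ((((i : ℕ) : ℤ) - ((i : ℕ) : ℤ)), 0) = 1 := by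
    norm_num [tm_zero, Prod.mk_zero_zero]
  have h1 : tm (0, (d i : ℤ) - (d i : ℤ)) = 1 := by
    norm_num [tm_zero, Prod.mk_zero_zero]
  rw [h0, h1]
  ring

/-- Lemma 7.3: the element `S = −A + B + C` of `ℤ[ℤ×ℤ]` satisfies
`S + ι(S) = D − A − ι(A)`, i.e. it is a square root of the character
`χ_X(I,I)₀` with respect to the duality involution `ι`. -/
theorem stmt_6 (k : ℕ) (d : Fin (k + 1) → ℕ) :
    (-Achar k d + Bchar k d + Cchar k d) + iota (-Achar k d + Bchar k d + Cchar k d) =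
      Dchar k d - Achar k d - iota (Achar k d) := by
  have key : Bchar k d + (Cchar k d + iota (Cchar k d)) + iota (Bchar k d) = Dchar k d := by
    rw [hiB, hB, hC, hD, sum_split]
  simp only [map_add, map_neg]
  linear_combination key

end
end

section
/- (Proposition of Section 7.1: Joyce–Song invariants of a local curve in degree one.) Let l₁, l₂, l₃ be integers and n ≥ 1 an integer. Work in the field ℚ(λ₀,λ₁,λ₂,λ₃), the fraction field of the polynomial ring ℚ[λ₀,λ₁,λ₂,λ₃]. For nonnegative integers a, b with a + b = n − 1, define V(a,b) : ℤ⁴ → ℤ to be the finitely supported function V(a,b) = −(l₁+1)·δ_{(0,1,0,0)} − (l₂+1)·δ_{(0,0,1,0)} − (l₃+1)·δ_{(0,0,0,1)} − Σ_{j=−b, j≠0}^{a} δ_{(j,0,0,0)}, where δ_w is the indicator function of w ∈ ℤ⁴. Then V(a,b)(0,0,0,0) = 0, and Σ_{a,b ≥ 0, a+b = n−1} e(V(a,b)) equals λ₁^{−(l₁+1)} λ₂^{−(l₂+1)} λ₃^{−(l₃+1)} if n = 1, and equals 0 if n ≥ 2. -/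
noncomputable section
open Nat Finset

/-- The field `ℚ(λ₀,λ₁,λ₂,λ₃)`, realized as the fraction field of `ℚ[λ₀,λ₁,λ₂,λ₃]`. -/
abbrev K4 : Type := FractionRing (MvPolynomial (Fin 4) ℚ)

/-- The variables `λ₀, λ₁, λ₂, λ₃` viewed in `ℚ(λ₀,λ₁,λ₂,λ₃)`. -/
def lam (i : Fin 4) : K4 := algebraMap (MvPolynomial (Fin 4) ℚ) K4 (MvPolynomial.X i)

/-- The equivariant Euler class of a finitely supported function `c : ℤ⁴ → ℤ`:
`e(c) = ∏_{w ∈ supp c} (w₀λ₀ + w₁λ₁ + w₂λ₂ + w₃λ₃)^{c(w)}`, with integer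
(possibly negative) powers. -/
def eul4 (c : (Fin 4 → ℤ) →₀ ℤ) : K4 :=
  c.prod fun w n => (∑ i : Fin 4, (w i : K4) * lam i) ^ n

lemma base_ne (w : Fin 4 → ℤ) (hw : w ≠ 0) : (∑ i : Fin 4, (w i : K4) * lam i) ≠ 0 := by
  have hrw : (∑ i : Fin 4, (w i : K4) * lam i) =
      algebraMap (MvPolynomial (Fin 4) ℚ) K4 (∑ i : Fin 4, MvPolynomial.C ((w i : ℚ)) * MvPolynomial.X i) := by
    simp [lam, map_sum, map_mul]
  rw [hrw]
  intro h
  have hp : (∑ i : Fin 4, MvPolynomial.C ((w i : ℚ)) * MvPolynomial.X i) = 0 :=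
    IsFractionRing.injective (MvPolynomial (Fin 4) ℚ) K4 (by simpa using h)
  obtain ⟨i, hi⟩ : ∃ i, w i ≠ 0 := by
    by_contra hc
    push_neg at hc
    exact hw (funext hc)
  have := congrArg (MvPolynomial.coeff (Finsupp.single i 1)) hp
  rw [MvPolynomial.coeff_sum] at this
  simp only [MvPolynomial.coeff_C_mul, MvPolynomial.coeff_X', MvPolynomial.coeff_zero] at this
  rw [Finset.sum_eq_single i] at this
  · simp at this
    exact hi (by exact_mod_cast this)
  · intro j _ hj
    rw [if_neg (by simpa [Finsupp.single_left_inj] using hj), mul_zero]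
  · simp

lemma eul4_add {c d : (Fin 4 → ℤ) →₀ ℤ} (hc : c 0 = 0) (hd : d 0 = 0) :
    eul4 (c + d) = eul4 c * eul4 d := by
  unfold eul4
  apply Finsupp.prod_add_index
  · intro w _; exact zpow_zero _
  · intro w hw m k
    rcases Finset.mem_union.1 hw with h | h
    · exact zpow_add₀ (base_ne w (by rintro rfl; exact (Finsupp.mem_support_iff.1 h) hc)) m k
    · exact zpow_add₀ (base_ne w (by rintro rfl; exact (Finsupp.mem_support_iff.1 h) hd)) m k

lemma eul4_single (w : Fin 4 → ℤ) (m : ℤ) :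
    eul4 (Finsupp.single w m) = (∑ i : Fin 4, (w i : K4) * lam i) ^ m :=
  Finsupp.prod_single_index (zpow_zero _)

lemma eul4_sum {ι : Type} (s : Finset ι) (g : ι → (Fin 4 → ℤ) →₀ ℤ)
    (h : ∀ i ∈ s, g i 0 = 0) : eul4 (∑ i ∈ s, g i) = ∏ i ∈ s, eul4 (g i) := by
  classical
  induction s using Finset.induction_on with
  | empty => simp [eul4]
  | @insert a s ha ih =>
    rw [Finset.sum_insert ha, Finset.prod_insert ha,
      eul4_add (h a (Finset.mem_insert_self a s)) ?_, ih fun i hi => h i (Finset.mem_insert_of_mem hi)]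
    rw [Finsupp.finset_sum_apply]
    exact Finset.sum_eq_zero fun i hi => h i (Finset.mem_insert_of_mem hi)

-- integer products
lemma prod_pos_part (a : ℕ) : ∏ j ∈ Finset.Icc (1:ℤ) (a:ℤ), j = (a ! : ℤ) := by
  induction a with
  | zero => simp
  | succ a ih =>
    have : Finset.Icc (1:ℤ) ((a:ℤ)+1) = insert ((a:ℤ)+1) (Finset.Icc (1:ℤ) (a:ℤ)) := by
      ext x; simp; omega
    push_cast
    rw [this, Finset.prod_insert (by simp), ih, Nat.factorial_succ]
    push_cast; ring

lemma prod_neg_part (b : ℕ) : ∏ j ∈ Finset.Icc (-(b:ℤ)) (-1:ℤ), j = (-1)^b * (b ! : ℤ) := by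
  induction b with
  | zero => simp
  | succ b ih =>
    have : Finset.Icc (-((b:ℤ)+1)) (-1:ℤ) = insert (-((b:ℤ)+1)) (Finset.Icc (-(b:ℤ)) (-1:ℤ)) := by
      ext x; simp; omega
    push_cast
    rw [this, Finset.prod_insert (by simp), ih, Nat.factorial_succ]
    push_cast; ring

lemma erase_split (a b : ℕ) : (Finset.Icc (-(b:ℤ)) (a:ℤ)).erase 0 =
    Finset.Icc (-(b:ℤ)) (-1:ℤ) ∪ Finset.Icc (1:ℤ) (a:ℤ) := by
  ext x; simp; omega

lemma prod_erase_int (a b : ℕ) : ∏ j ∈ (Finset.Icc (-(b:ℤ)) (a:ℤ)).erase 0, j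
    = (-1)^b * (a ! : ℤ) * (b ! : ℤ) := by
  rw [erase_split, Finset.prod_union (by
    rw [Finset.disjoint_left]; intro x hx hx'; simp at hx hx'; omega),
    prod_pos_part, prod_neg_part]
  ring

lemma card_erase (a b : ℕ) : ((Finset.Icc (-(b:ℤ)) (a:ℤ)).erase 0).card = a + b := by
  rw [Finset.card_erase_of_mem (by simp), Int.card_Icc]
  omega

lemma alt_sum_s7 {F : Type*} [Field F] [CharZero F] {m : ℕ} (hm : m ≠ 0) :
    ∑ p ∈ antidiagonal m, (-1:F)^p.2 * (((p.1)! : F) * ((p.2)! : F))⁻¹ = 0 := by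
  have hswap := Finset.Nat.sum_antidiagonal_swap
    (f := fun p : ℕ × ℕ => (-1:F)^p.2 * (((p.1)! : F) * ((p.2)! : F))⁻¹) (n := m)
  rw [← hswap]
  rw [Finset.Nat.sum_antidiagonal_eq_sum_range_succ_mk]
  have hterm : ∀ k ∈ range (m+1),
      (-1:F)^(k, m - k).swap.2 * ((((k, m-k).swap.1)! : F) * (((k, m-k).swap.2)! : F))⁻¹
        = (((-1:ℤ)^k * (m.choose k) : ℤ) : F) * ((m ! : F))⁻¹ := by
    intro k hk
    have hk' : k ≤ m := by simp at hk; omega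
    have hc : ((m.choose k : F)) = (m ! : F) / ((k ! : F) * ((m - k)! : F)) := Nat.cast_choose F hk'
    have hm0 : ((m !: F)) ≠ 0 := by exact_mod_cast (Nat.factorial_ne_zero m)
    have hk0 : ((k !: F)) ≠ 0 := by exact_mod_cast (Nat.factorial_ne_zero k)
    have hmk0 : (((m-k) !: F)) ≠ 0 := by exact_mod_cast (Nat.factorial_ne_zero (m-k))
    push_cast
    simp only [Prod.swap]
    rw [hc]
    field_simp
  rw [Finset.sum_congr rfl hterm, ← Finset.sum_mul, ← Int.cast_sum,
    Int.alternating_sum_range_choose]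
  simp [hm]

/-- The character `V(a,b) = −(l₁+1)δ_{(0,1,0,0)} − (l₂+1)δ_{(0,0,1,0)} − (l₃+1)δ_{(0,0,0,1)}
− Σ_{j=−b, j≠0}^{a} δ_{(j,0,0,0)}` of the chosen square root `χ_X(I,I)₀^{1/2}` at the
torus-fixed Joyce–Song stable pair indexed by `(a,b)`. -/
def V (l1 l2 l3 : ℤ) (a b : ℕ) : (Fin 4 → ℤ) →₀ ℤ :=
  Finsupp.single ![0, 1, 0, 0] (-(l1 + 1)) + Finsupp.single ![0, 0, 1, 0] (-(l2 + 1)) +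
    Finsupp.single ![0, 0, 0, 1] (-(l3 + 1)) -
    ∑ j ∈ (Finset.Icc (-(b : ℤ)) (a : ℤ)).erase 0, Finsupp.single ![j, 0, 0, 0] 1

lemma w1_ne : (![0, 1, 0, 0] : Fin 4 → ℤ) ≠ 0 := by intro h; simpa using congrFun h 1
lemma w2_ne : (![0, 0, 1, 0] : Fin 4 → ℤ) ≠ 0 := by intro h; simpa using congrFun h 2
lemma w3_ne : (![0, 0, 0, 1] : Fin 4 → ℤ) ≠ 0 := by intro h; simpa using congrFun h 3
lemma wj_ne {j : ℤ} (hj : j ≠ 0) : (![j, 0, 0, 0] : Fin 4 → ℤ) ≠ 0 := by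
  intro h; exact hj (by simpa using congrFun h 0)

lemma V_apply_zero (l1 l2 l3 : ℤ) (a b : ℕ) : V l1 l2 l3 a b (0 : Fin 4 → ℤ) = 0 := by
  unfold V
  rw [Finsupp.sub_apply, Finsupp.add_apply, Finsupp.add_apply, Finsupp.finset_sum_apply]
  rw [Finsupp.single_eq_of_ne' w1_ne, Finsupp.single_eq_of_ne' w2_ne,
    Finsupp.single_eq_of_ne' w3_ne, Finset.sum_eq_zero]
  · ring
  · intro j hj
    exact Finsupp.single_eq_of_ne' (wj_ne (Finset.ne_of_mem_erase hj))

lemma base1 : (∑ i : Fin 4, ((![0,1,0,0] : Fin 4 → ℤ) i : K4) * lam i) = lam 1 := by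
  simp [Fin.sum_univ_four]
lemma base2 : (∑ i : Fin 4, ((![0,0,1,0] : Fin 4 → ℤ) i : K4) * lam i) = lam 2 := by
  simp [Fin.sum_univ_four]
lemma base3 : (∑ i : Fin 4, ((![0,0,0,1] : Fin 4 → ℤ) i : K4) * lam i) = lam 3 := by
  simp [Fin.sum_univ_four]
lemma basej (j : ℤ) : (∑ i : Fin 4, ((![j,0,0,0] : Fin 4 → ℤ) i : K4) * lam i) = (j : K4) * lam 0 := by
  simp [Fin.sum_univ_four]

lemma eul4_V (l1 l2 l3 : ℤ) (a b : ℕ) :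
    eul4 (V l1 l2 l3 a b) =
      lam 1 ^ (-(l1+1)) * lam 2 ^ (-(l2+1)) * lam 3 ^ (-(l3+1)) *
      (((-1:K4)^b * (a ! : K4) * (b ! : K4)) * lam 0 ^ (a+b))⁻¹ := by
  have hz : ∀ (w : Fin 4 → ℤ), w ≠ 0 → ∀ (v : ℤ), (Finsupp.single w v) (0 : Fin 4 → ℤ) = 0 :=
    fun w hw v => Finsupp.single_eq_of_ne' hw
  have hVeq : V l1 l2 l3 a b =
      Finsupp.single ![0, 1, 0, 0] (-(l1 + 1)) + (Finsupp.single ![0, 0, 1, 0] (-(l2 + 1)) +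
      (Finsupp.single ![0, 0, 0, 1] (-(l3 + 1)) +
      ∑ j ∈ (Finset.Icc (-(b : ℤ)) (a : ℤ)).erase 0, Finsupp.single ![j, 0, 0, 0] (-1 : ℤ))) := by
    unfold V
    simp only [Finsupp.single_neg, Finset.sum_neg_distrib]
    abel
  have hsum0 : (∑ j ∈ (Finset.Icc (-(b : ℤ)) (a : ℤ)).erase 0,
      Finsupp.single ![j, 0, 0, 0] (-1 : ℤ)) (0 : Fin 4 → ℤ) = 0 := by
    rw [Finsupp.finset_sum_apply]
    exact Finset.sum_eq_zero fun j hj => hz _ (wj_ne (Finset.ne_of_mem_erase hj)) _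
  rw [hVeq, eul4_add (hz _ w1_ne _) ?h1, eul4_add (hz _ w2_ne _) ?h2,
    eul4_add (hz _ w3_ne _) hsum0, eul4_single, eul4_single, eul4_single,
    eul4_sum _ _ (fun j hj => hz _ (wj_ne (Finset.ne_of_mem_erase hj)) _),
    base1, base2, base3]
  case h1 =>
    rw [Finsupp.add_apply, Finsupp.add_apply, hz _ w2_ne, hz _ w3_ne, hsum0]; ring
  case h2 =>
    rw [Finsupp.add_apply, hz _ w3_ne, hsum0]; ring
  have hprod : (∏ j ∈ (Finset.Icc (-(b : ℤ)) (a : ℤ)).erase 0,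
      eul4 (Finsupp.single ![j, 0, 0, 0] (-1 : ℤ)))
      = (((-1:K4)^b * (a ! : K4) * (b ! : K4)) * lam 0 ^ (a+b))⁻¹ := by
    have : ∀ j ∈ (Finset.Icc (-(b : ℤ)) (a : ℤ)).erase 0,
        eul4 (Finsupp.single ![j, 0, 0, 0] (-1 : ℤ)) = ((j : K4) * lam 0)⁻¹ := by
      intro j hj
      rw [eul4_single, basej, zpow_neg_one]
    rw [Finset.prod_congr rfl this, Finset.prod_inv_distrib, Finset.prod_mul_distrib,
      Finset.prod_const, card_erase]
    congr 2
    have h2 : ((∏ j ∈ (Finset.Icc (-(b : ℤ)) (a : ℤ)).erase 0, j : ℤ) : K4)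
        = (-1:K4)^b * (a ! : K4) * (b ! : K4) := by
      rw [prod_erase_int a b]; push_cast; ring
    rw [← h2, Int.cast_prod]
  rw [hprod]
  ring

/-- Proposition of Section 7.1: for integers `l₁, l₂, l₃` and `n ≥ 1`, each character
`V(a,b)` with `a + b = n − 1` vanishes at `0 ∈ ℤ⁴`, and the `T`-equivariant degree-one
Joyce–Song stable pair invariant `P^{JS}_{n,1} = Σ_{a+b=n−1} e(V(a,b))` equals
`λ₁^{−(l₁+1)} λ₂^{−(l₂+1)} λ₃^{−(l₃+1)}` if `n = 1`, and `0` if `n ≥ 2`. -/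
theorem stmt_7 (l1 l2 l3 : ℤ) (n : ℕ) (hn : 1 ≤ n) :
    (∀ a b : ℕ, a + b = n - 1 → V l1 l2 l3 a b (0 : Fin 4 → ℤ) = 0) ∧
    (∑ p ∈ Finset.HasAntidiagonal.antidiagonal (n - 1), eul4 (V l1 l2 l3 p.1 p.2)) =
      if n = 1 then
        lam 1 ^ (-(l1 + 1)) * lam 2 ^ (-(l2 + 1)) * lam 3 ^ (-(l3 + 1))
      else 0 := by
  refine ⟨fun a b _ => V_apply_zero l1 l2 l3 a b, ?_⟩
  set m := n - 1 with hm
  rw [Finset.sum_congr rfl fun p _ => eul4_V l1 l2 l3 p.1 p.2, ← Finset.mul_sum]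
  rcases eq_or_ne n 1 with h1 | h1
  · subst h1
    rw [show m = 0 by omega]
    simp
  · have hm0 : m ≠ 0 := by omega
    rw [if_neg h1]
    have hterm : ∀ p ∈ antidiagonal m,
        (((-1:K4)^p.2 * ((p.1)! : K4) * ((p.2)! : K4)) * lam 0 ^ (p.1+p.2))⁻¹
          = ((-1:K4)^p.2 * (((p.1)! : K4) * ((p.2)! : K4))⁻¹) * (lam 0 ^ m)⁻¹ := by
      intro p hp
      rw [Finset.HasAntidiagonal.mem_antidiagonal.mp hp |>.symm] at *
      rw [mul_inv, mul_inv, mul_inv]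
      rw [show ((-1:K4)^p.2)⁻¹ = (-1:K4)^p.2 by rw [← inv_pow, inv_neg_one]]
      ring
    rw [Finset.sum_congr rfl hterm, ← Finset.sum_mul, alt_sum_s7 hm0, zero_mul, mul_zero]


end
end
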